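/- Fix k > 0, σ > 0 and let g(z) = 1/(1 + z²). For ε > 0 define u_ε(x,y) = x + ε cos(kx) and let u_{ε,σ} be the convolution of u_ε with the two-dimensional Gaussian of standard deviation σ (so ∂_x u_{ε,σ}(x) = 1 − ε k e^{−k²σ²/2} sin(kx)). For ε small let R_ε^σ(x,y) = [ |∇u_ε| div( g(|∇u_{ε,σ}|) ∇u_ε/|∇u_ε| ) ](x,y) be the pre-smoothed self-snakes right-hand side. Then, as ε → 0⁺, sup over (x,y) of | R_ε^σ(x,y) − (k² ε/2) e^{−k²σ²/2} cos(kx) | = O(ε²). (With Gaussian pre-smoothing, the frequency response factor becomes k² e^{−k²σ²/2}/2, which is globally bounded in k.) -/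

import Mathlib

open MeasureTheory Filter Topology Real

noncomputable section

abbrev Plane := EuclideanSpace ℝ (Fin 2)

/-- divergence of a planar vector field -/
def div2 (V : Plane → Plane) (x : Plane) : ℝ :=
  ∑ i : Fin 2, fderiv ℝ (fun y => V y i) x (EuclideanSpace.single i 1)

/-- the Perona–Malik edge-stopping function (β = 1) -/
def g (z : ℝ) : ℝ := 1 / (1 + z ^ 2)

/-- the perturbed slope u_ε(x,y) = x + ε cos(kx) -/
def uPert (k ε : ℝ) (p : Plane) : ℝ := p 0 + ε * Real.cos (k * p 0)

/-- the two-dimensional Gaussian kernel of standard deviation σ -/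
def gauss2 (σ : ℝ) (q : Plane) : ℝ :=
  1 / (2 * π * σ ^ 2) * Real.exp (-‖q‖ ^ 2 / (2 * σ ^ 2))

/-- Gaussian pre-smoothing: convolution with the 2D Gaussian of st.dev. σ -/
def presmooth (σ : ℝ) (u : Plane → ℝ) (p : Plane) : ℝ :=
  ∫ q : Plane, gauss2 σ q * u (p - q)

/-- the pre-smoothed self-snakes right-hand side
|∇u| div( g(|∇u_σ|) ∇u/|∇u| ) -/
def selfSnakesRHSsigma (σ : ℝ) (u : Plane → ℝ) (p : Plane) : ℝ :=
  ‖gradient u p‖ *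
    div2 (fun y =>
      (g ‖gradient (presmooth σ u) y‖ / ‖gradient u y‖) • gradient u y) p

/-! ### Auxiliary 1D integral computations -/

lemma aux_odd_zero {f : ℝ → ℝ} (h : ∀ x, f (-x) = - f x) : ∫ x : ℝ, f x = 0 := by
  have h1 := integral_neg_eq_self f (volume : Measure ℝ)
  simp only [h, integral_neg] at h1
  linarith

lemma aux_odd_int (b : ℝ) : ∫ x : ℝ, x * Real.exp (-b * x ^ 2) = 0 :=
  aux_odd_zero (fun x => by simp [neg_mul])

lemma aux_sin_int (b k : ℝ) : ∫ x : ℝ, Real.sin (k * x) * Real.exp (-b * x ^ 2) = 0 :=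
  aux_odd_zero (fun x => by simp [mul_neg, neg_mul])

lemma aux_cos_int {b : ℝ} (hb : 0 < b) (k : ℝ) :
    ∫ x : ℝ, Real.cos (k * x) * Real.exp (-b * x ^ 2)
      = Real.sqrt (π / b) * Real.exp (-k ^ 2 / (4 * b)) := by
  have hbc : (0:ℝ) < (b : ℂ).re := by simpa using hb
  have h := fourierIntegral_gaussian (b := (b:ℂ)) hbc (k : ℂ)
  have hint : Integrable (fun x : ℝ => Complex.exp (Complex.I * k * x) *
      Complex.exp (-(b:ℂ) * x ^ 2)) := by
    have := integrable_cexp_quadratic (b := (b:ℂ)) hbc (Complex.I * k) 0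
    refine this.congr ?_
    filter_upwards with x
    rw [add_zero, ← Complex.exp_add, add_comm]
  have hre := integral_re hint
  simp only [RCLike.re_to_complex] at hre
  rw [h] at hre
  have hL : ∀ x : ℝ, (Complex.exp (Complex.I * k * x) * Complex.exp (-(b:ℂ) * x ^ 2)).re
      = Real.cos (k * x) * Real.exp (-b * x ^ 2) := by
    intro x
    rw [← Complex.exp_add, Complex.exp_re]
    have h1 : (Complex.I * k * x + -(b:ℂ) * x ^ 2).re = -b * x ^ 2 := by
      simp [← Complex.ofReal_pow]
    have h2 : (Complex.I * k * x + -(b:ℂ) * x ^ 2).im = k * x := by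
      simp [← Complex.ofReal_pow]
    rw [h1, h2]; ring
  have hR : (((π : ℂ) / b) ^ (1 / 2 : ℂ) * Complex.exp (-(k:ℂ) ^ 2 / (4 * b))).re
      = Real.sqrt (π / b) * Real.exp (-k ^ 2 / (4 * b)) := by
    have e1 : ((π : ℂ) / b) = ((π / b : ℝ) : ℂ) := by push_cast; ring
    have e2 : ((1 / 2 : ℂ)) = ((1 / 2 : ℝ) : ℂ) := by norm_num
    have e3 : (-(k:ℂ) ^ 2 / (4 * (b:ℂ))) = ((-k ^ 2 / (4 * b) : ℝ) : ℂ) := by push_cast; ring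
    rw [e1, e2, e3, ← Complex.ofReal_cpow (by positivity), ← Complex.ofReal_exp,
      ← Complex.ofReal_mul, Complex.ofReal_re, Real.sqrt_eq_rpow]
  rw [← hR, ← hre]
  exact integral_congr_ae (Filter.Eventually.of_forall fun x => (hL x).symm)

/-! ### The convolution with the Gaussian -/

lemma aux_presmooth_eq (k σ ε : ℝ) (hσ : 0 < σ) (p : Plane) :
    presmooth σ (uPert k ε) p
      = p 0 + ε * Real.exp (-(k ^ 2 * σ ^ 2) / 2) * Real.cos (k * p 0) := by
  set b : ℝ := (2 * σ ^ 2)⁻¹ with hbdef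
  have hb : 0 < b := by positivity
  set A : ℝ := 1 / (2 * π * σ ^ 2) with hAdef
  set x : ℝ := p 0 with hxdef
  set f : Fin 2 → ℝ → ℝ :=
    ![fun t => A * Real.exp (-b * t ^ 2) * (x - t + ε * Real.cos (k * (x - t))),
      fun t => Real.exp (-b * t ^ 2)] with hfdef
  have key : presmooth σ (uPert k ε) p = (∫ t : ℝ, f 0 t) * ∫ t : ℝ, f 1 t := by
    rw [presmooth]
    have hmp := (EuclideanSpace.volume_preserving_symm_measurableEquiv_toLp (Fin 2)).symm
    rw [← hmp.integral_comp (MeasurableEquiv.measurableEmbedding _)]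
    rw [show (∫ v : Fin 2 → ℝ,
        gauss2 σ ((MeasurableEquiv.toLp 2 (Fin 2 → ℝ)).symm.symm v) *
          uPert k ε (p - (MeasurableEquiv.toLp 2 (Fin 2 → ℝ)).symm.symm v))
        = ∫ v : Fin 2 → ℝ, ∏ i, f i (v i) from ?_]
    · rw [integral_fintype_prod_volume_eq_prod (ι := Fin 2) f, Fin.prod_univ_two]
    · congr 1
      funext v
      have hq : ∀ i : Fin 2, ((MeasurableEquiv.toLp 2 (Fin 2 → ℝ)).symm.symm v : Plane) i = v i :=
        fun i => rfl
      have hnorm : ‖((MeasurableEquiv.toLp 2 (Fin 2 → ℝ)).symm.symm v : Plane)‖ ^ 2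
          = v 0 ^ 2 + v 1 ^ 2 := by
        rw [EuclideanSpace.norm_eq, Real.sq_sqrt (by positivity)]
        simp [Fin.sum_univ_two, sq_abs, hq]
      rw [Fin.prod_univ_two, hfdef]
      simp only [Matrix.cons_val_zero, Matrix.cons_val_one, Matrix.head_cons]
      rw [gauss2, hnorm, uPert]
      have hsub : (p - (MeasurableEquiv.toLp 2 (Fin 2 → ℝ)).symm.symm v) 0 = x - v 0 := rfl
      rw [hsub]
      rw [show -(v 0 ^ 2 + v 1 ^ 2) / (2 * σ ^ 2) = -b * v 0 ^ 2 + -b * v 1 ^ 2 by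
        rw [hbdef, div_eq_mul_inv]; ring]
      rw [Real.exp_add]
      ring
  rw [key]
  have hE : Integrable (fun t : ℝ => Real.exp (-b * t ^ 2)) := integrable_exp_neg_mul_sq hb
  have hT : Integrable (fun t : ℝ => t * Real.exp (-b * t ^ 2)) :=
    integrable_mul_exp_neg_mul_sq hb
  have hC : Integrable (fun t : ℝ => Real.cos (k * t) * Real.exp (-b * t ^ 2)) :=
    hE.bdd_mul ((Real.continuous_cos.comp (continuous_const.mul continuous_id)).aestronglyMeasurable)
      (Filter.Eventually.of_forall fun t => by simpa using Real.abs_cos_le_one _)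
  have hS : Integrable (fun t : ℝ => Real.sin (k * t) * Real.exp (-b * t ^ 2)) :=
    hE.bdd_mul ((Real.continuous_sin.comp (continuous_const.mul continuous_id)).aestronglyMeasurable)
      (Filter.Eventually.of_forall fun t => by simpa using Real.abs_sin_le_one _)
  have h1 : (∫ t : ℝ, f 1 t) = Real.sqrt (π / b) := by
    simp only [hfdef, Matrix.cons_val_one, Matrix.head_cons]
    exact integral_gaussian b
  have h0 : (∫ t : ℝ, f 0 t)
      = A * (x * Real.sqrt (π / b)
          + ε * Real.cos (k * x) * (Real.sqrt (π / b) * Real.exp (-k ^ 2 / (4 * b)))) := by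
    have hrw : (fun t : ℝ => f 0 t) = fun t : ℝ =>
        A * ((x * Real.exp (-b * t ^ 2) - t * Real.exp (-b * t ^ 2)
          + ε * Real.cos (k * x) * (Real.cos (k * t) * Real.exp (-b * t ^ 2)))
          + ε * Real.sin (k * x) * (Real.sin (k * t) * Real.exp (-b * t ^ 2))) := by
      funext t
      simp only [hfdef, Matrix.cons_val_zero]
      rw [show k * (x - t) = k * x - k * t by ring, Real.cos_sub]
      ring
    rw [hrw, integral_const_mul]
    have hI1 : Integrable (fun t : ℝ => x * Real.exp (-b * t ^ 2)) := hE.const_mul x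
    have hI2 : Integrable (fun t : ℝ => x * Real.exp (-b * t ^ 2) - t * Real.exp (-b * t ^ 2)) :=
      hI1.sub hT
    have hI3 : Integrable (fun t : ℝ => x * Real.exp (-b * t ^ 2) - t * Real.exp (-b * t ^ 2)
        + ε * Real.cos (k * x) * (Real.cos (k * t) * Real.exp (-b * t ^ 2))) :=
      hI2.add (hC.const_mul _)
    have hI4 : Integrable
        (fun t : ℝ => ε * Real.sin (k * x) * (Real.sin (k * t) * Real.exp (-b * t ^ 2))) :=
      hS.const_mul _
    rw [integral_add hI3 hI4, integral_add hI2 (hC.const_mul _), integral_sub hI1 hT,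
      integral_const_mul, integral_const_mul, integral_const_mul,
      integral_gaussian, aux_odd_int, aux_sin_int, aux_cos_int hb]
    ring
  rw [h0, h1]
  have hkb : -k ^ 2 / (4 * b) = -(k ^ 2 * σ ^ 2) / 2 := by
    rw [hbdef]; field_simp; ring
  rw [hkb]
  set S := Real.sqrt (π / b) with hSdef
  have hππ : S * S = 2 * π * σ ^ 2 := by
    rw [hSdef, Real.mul_self_sqrt (by positivity), hbdef]
    field_simp
  have hA : A * (2 * π * σ ^ 2) = 1 := by
    rw [hAdef]; field_simp
  have hfin : A * (x * S + ε * Real.cos (k * x) * (S * Real.exp (-(k ^ 2 * σ ^ 2) / 2))) * S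
      = (A * (2 * π * σ ^ 2)) * (x + ε * Real.exp (-(k ^ 2 * σ ^ 2) / 2) * Real.cos (k * x)) := by
    rw [← hππ]; ring
  rw [hfin, hA, one_mul]

/-! ### Gradients and the divergence -/

lemma aux_grad_lin_cos (c k : ℝ) (p : Plane) :
    HasGradientAt (fun q : Plane => q 0 + c * Real.cos (k * q 0))
      ((1 - c * k * Real.sin (k * p 0)) • EuclideanSpace.single 0 (1:ℝ)) p := by
  have h1 : HasDerivAt (fun t : ℝ => k * t) k (p 0) := by
    simpa using (hasDerivAt_id (p 0)).const_mul k
  have h2 : HasDerivAt (fun t : ℝ => Real.cos (k * t)) (-Real.sin (k * p 0) * k) (p 0) :=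
    (Real.hasDerivAt_cos (k * p 0)).comp (p 0) h1
  have hφ : HasDerivAt (fun t : ℝ => t + c * Real.cos (k * t))
      (1 - c * k * Real.sin (k * p 0)) (p 0) := by
    have := (hasDerivAt_id (p 0)).add (h2.const_mul c)
    exact this.congr_deriv (by ring)
  have hproj : HasFDerivAt (fun q : Plane => q 0)
      (EuclideanSpace.proj (0 : Fin 2) : Plane →L[ℝ] ℝ) p :=
    (EuclideanSpace.proj (0 : Fin 2) : Plane →L[ℝ] ℝ).hasFDerivAt
  have hF := hφ.comp_hasFDerivAt p hproj
  rw [hasGradientAt_iff_hasFDerivAt]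
  refine hF.congr_fderiv ?_
  apply ContinuousLinearMap.ext
  intro w
  simp [InnerProductSpace.toDual_apply_apply, real_inner_smul_left,
    EuclideanSpace.inner_single_left]

lemma aux_norm_smul_single (r : ℝ) :
    ‖r • (EuclideanSpace.single 0 (1:ℝ) : Plane)‖ = |r| := by
  rw [norm_smul, EuclideanSpace.norm_single]
  simp

lemma aux_psi_hasDerivAt (a k t : ℝ) :
    HasDerivAt (fun t : ℝ => g (1 - a * Real.sin (k * t)))
      (2 * (1 - a * Real.sin (k * t)) / (1 + (1 - a * Real.sin (k * t)) ^ 2) ^ 2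
        * (a * k * Real.cos (k * t))) t := by
  have h1 : HasDerivAt (fun s : ℝ => k * s) k t := by
    simpa using (hasDerivAt_id t).const_mul k
  have h2 : HasDerivAt (fun s : ℝ => Real.sin (k * s)) (Real.cos (k * t) * k) t :=
    (Real.hasDerivAt_sin (k * t)).comp t h1
  have hw : HasDerivAt (fun s : ℝ => 1 - a * Real.sin (k * s))
      (-(a * (Real.cos (k * t) * k))) t := (h2.const_mul a).const_sub 1
  set w : ℝ := 1 - a * Real.sin (k * t) with hwdef
  have hden : HasDerivAt (fun z : ℝ => 1 + z ^ 2) (2 * w) w := by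
    simpa using ((hasDerivAt_pow 2 w).const_add 1)
  have hne : (1 : ℝ) + w ^ 2 ≠ 0 := by positivity
  have hg : HasDerivAt (fun z : ℝ => g z) (-(2 * w) / (1 + w ^ 2) ^ 2) w := by
    have := hden.inv hne
    simp only [g, one_div]; exact this
  have := hg.comp t hw
  exact this.congr_deriv (by ring)

lemma aux_div2_single (ψ : ℝ → ℝ) (ψ' : ℝ) (p : Plane) (hψ : HasDerivAt ψ ψ' (p 0)) :
    div2 (fun y => ψ (y 0) • EuclideanSpace.single 0 (1:ℝ)) p = ψ' := by
  rw [div2, Fin.sum_univ_two]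
  have hc0 : ∀ y : Plane, (ψ (y 0) • EuclideanSpace.single 0 (1:ℝ) : Plane) 0 = ψ (y 0) := by
    intro y; simp [EuclideanSpace.single_apply]
  have hc1 : ∀ y : Plane, (ψ (y 0) • EuclideanSpace.single 0 (1:ℝ) : Plane) 1 = 0 := by
    intro y; simp [EuclideanSpace.single_apply]
  have e1 : (fun y : Plane => (ψ (y 0) • EuclideanSpace.single 0 (1:ℝ) : Plane) 1)
      = fun _ => (0:ℝ) := funext hc1
  have e0 : (fun y : Plane => (ψ (y 0) • EuclideanSpace.single 0 (1:ℝ) : Plane) 0)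
      = fun y : Plane => ψ (y 0) := funext hc0
  rw [e0, e1, fderiv_fun_const]
  have hproj : HasFDerivAt (fun q : Plane => q 0)
      (EuclideanSpace.proj (0 : Fin 2) : Plane →L[ℝ] ℝ) p :=
    (EuclideanSpace.proj (0 : Fin 2) : Plane →L[ℝ] ℝ).hasFDerivAt
  have hF : HasFDerivAt (fun y : Plane => ψ (y 0))
      (ψ' • (EuclideanSpace.proj (0 : Fin 2) : Plane →L[ℝ] ℝ)) p :=
    hψ.comp_hasFDerivAt p hproj
  rw [hF.fderiv]
  simp [EuclideanSpace.single_apply]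

/-! ### The exact formula for the right-hand side -/

lemma aux_rhs_eq (k σ ε : ℝ) (hσ : 0 < σ) (hε : 0 < ε) (hεk : ε * k < 1) (hk : 0 < k) (p : Plane) :
    selfSnakesRHSsigma σ (uPert k ε) p
      = (1 - ε * k * Real.sin (k * p 0)) *
        (2 * (1 - ε * Real.exp (-(k ^ 2 * σ ^ 2) / 2) * k * Real.sin (k * p 0)) /
          (1 + (1 - ε * Real.exp (-(k ^ 2 * σ ^ 2) / 2) * k * Real.sin (k * p 0)) ^ 2) ^ 2
          * (ε * Real.exp (-(k ^ 2 * σ ^ 2) / 2) * k * k * Real.cos (k * p 0))) := by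
  set c' : ℝ := ε * Real.exp (-(k ^ 2 * σ ^ 2) / 2) with hc'def
  have hc'pos : 0 < c' := by positivity
  have hc'le : c' ≤ ε := by
    rw [hc'def]
    nlinarith [Real.exp_le_one_iff.mpr (show -(k ^ 2 * σ ^ 2) / 2 ≤ 0 by nlinarith [sq_nonneg (k * σ)]), hε.le]
  have hvpos : ∀ y : Plane, 0 < 1 - ε * k * Real.sin (k * y 0) := by
    intro y
    nlinarith [mul_nonneg (mul_pos hε hk).le (sub_nonneg.mpr (Real.sin_le_one (k * y 0))), hεk]
  have hgu : ∀ y : Plane, gradient (uPert k ε) y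
      = (1 - ε * k * Real.sin (k * y 0)) • EuclideanSpace.single 0 (1:ℝ) :=
    fun y => (aux_grad_lin_cos ε k y).gradient
  have hps : presmooth σ (uPert k ε) = fun q : Plane => q 0 + c' * Real.cos (k * q 0) :=
    funext fun q => by rw [aux_presmooth_eq k σ ε hσ q, hc'def]
  have hgp : ∀ y : Plane, gradient (presmooth σ (uPert k ε)) y
      = (1 - c' * k * Real.sin (k * y 0)) • EuclideanSpace.single 0 (1:ℝ) := by
    intro y
    rw [hps]
    exact (aux_grad_lin_cos c' k y).gradient
  rw [selfSnakesRHSsigma]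
  have hV : (fun y : Plane =>
      (g ‖gradient (presmooth σ (uPert k ε)) y‖ / ‖gradient (uPert k ε) y‖) •
        gradient (uPert k ε) y)
      = fun y : Plane =>
        g (1 - c' * k * Real.sin (k * y 0)) • EuclideanSpace.single 0 (1:ℝ) := by
    funext y
    rw [hgu y, hgp y, aux_norm_smul_single, aux_norm_smul_single,
      abs_of_pos (hvpos y), smul_smul,
      div_mul_cancel₀ _ (hvpos y).ne']
    congr 1
    rw [g, g, sq_abs]
  rw [hV, aux_div2_single _ _ p (aux_psi_hasDerivAt (c' * k) k (p 0)),
    hgu p, aux_norm_smul_single, abs_of_pos (hvpos p)]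

lemma aux_num_bound (m α β : ℝ) (hm : 0 ≤ m) (hm2 : m ≤ 1/2)
    (hα1 : -m ≤ α) (hα2 : α ≤ m) (hβ1 : -m ≤ β) (hβ2 : β ≤ m) :
    |4 * (1 - α) * (1 - β) - (1 + (1 - β) ^ 2) ^ 2| ≤ 16 * m := by
  have e : 4 * (1 - α) * (1 - β) - (1 + (1 - β) ^ 2) ^ 2
      = -4*α + 4*β + 4*α*β - 8*β^2 + 4*β^3 - β^4 := by ring
  rw [e, abs_le]
  have hβ2sq : β ^ 2 ≤ m ^ 2 := by nlinarith
  have hmsq : m ^ 2 ≤ m / 2 := by nlinarith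
  have hcube1 : -m ^ 3 ≤ β ^ 3 := by nlinarith [sq_nonneg (β + m), sq_nonneg (β - m), sq_nonneg β]
  have hcube2 : β ^ 3 ≤ m ^ 3 := by nlinarith [sq_nonneg (β + m), sq_nonneg (β - m), sq_nonneg β]
  have hm3 : m ^ 3 ≤ m / 4 := by nlinarith
  have hq : β ^ 4 ≤ m ^ 4 := by
    nlinarith [sq_nonneg β, sq_nonneg m, sq_nonneg (β^2 - m^2), sq_nonneg (β^2 + m^2)]
  have hm4 : m ^ 4 ≤ m / 8 := by nlinarith
  have hαβ1 : α * β ≤ m ^ 2 := by nlinarith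
  have hαβ2 : -m ^ 2 ≤ α * β := by nlinarith
  constructor <;> nlinarith [sq_nonneg β]

lemma aux_final_bound (k ε E s c : ℝ) (hk : 0 < k) (hε : 0 < ε) (hE : 0 < E) (hE1 : E ≤ 1)
    (hm : ε * k ≤ 1/2) (hs : |s| ≤ 1) (hc : |c| ≤ 1) :
    |(1 - ε * k * s) *
        (2 * (1 - ε * E * k * s) / (1 + (1 - ε * E * k * s) ^ 2) ^ 2 * (ε * E * k * k * c))
      - k ^ 2 * ε / 2 * E * c| ≤ 8 * k ^ 3 * ε ^ 2 := by
  set v : ℝ := 1 - ε * k * s with hv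
  set w : ℝ := 1 - ε * E * k * s with hw
  have hd : (0:ℝ) < (1 + w ^ 2) ^ 2 := by positivity
  have key : v * (2 * w / (1 + w ^ 2) ^ 2 * (ε * E * k * k * c)) - k ^ 2 * ε / 2 * E * c
      = (ε * E * k * k * c) * ((4 * v * w - (1 + w ^ 2) ^ 2) / (2 * (1 + w ^ 2) ^ 2)) := by
    field_simp
    ring
  rw [key, abs_mul, abs_div]
  have hm0 : 0 ≤ ε * k := (mul_pos hε hk).le
  have hs' := abs_le.mp hs
  have hEs1 : E * s ≤ 1 := by nlinarith
  have hEs2 : -1 ≤ E * s := by nlinarith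
  have hnum : |4 * v * w - (1 + w ^ 2) ^ 2| ≤ 16 * (ε * k) := by
    have h1 : -(ε*k) ≤ ε * k * s := by nlinarith
    have h2 : ε * k * s ≤ ε * k := by nlinarith
    have h3 : -(ε*k) ≤ ε * E * k * s := by nlinarith
    have h4 : ε * E * k * s ≤ ε * k := by nlinarith
    rw [hv, hw]
    exact aux_num_bound (ε*k) (ε*k*s) (ε*E*k*s) hm0 hm h1 h2 h3 h4
  have hden : (2:ℝ) ≤ |2 * (1 + w ^ 2) ^ 2| := by
    rw [abs_of_pos (by positivity)]
    nlinarith [sq_nonneg w, sq_nonneg (w^2)]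
  have hfrac : |4 * v * w - (1 + w ^ 2) ^ 2| / |2 * (1 + w ^ 2) ^ 2| ≤ 8 * (ε * k) := by
    calc |4 * v * w - (1 + w ^ 2) ^ 2| / |2 * (1 + w ^ 2) ^ 2|
        ≤ 16 * (ε * k) / 2 := by
          apply div_le_div₀ (by positivity) hnum (by norm_num) hden
      _ = 8 * (ε * k) := by ring
  have hfac : |ε * E * k * k * c| ≤ ε * k ^ 2 := by
    rw [abs_mul, abs_of_pos (show (0:ℝ) < ε * E * k * k by positivity)]
    calc ε * E * k * k * |c| ≤ ε * 1 * k * k * 1 := by gcongr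
      _ = ε * k ^ 2 := by ring
  calc |ε * E * k * k * c| * (|4 * v * w - (1 + w ^ 2) ^ 2| / |2 * (1 + w ^ 2) ^ 2|)
      ≤ (ε * k ^ 2) * (8 * (ε * k)) :=
        mul_le_mul hfac hfrac (by positivity) (by positivity)
    _ = 8 * k ^ 3 * ε ^ 2 := by ring

/-- With Gaussian pre-smoothing of standard deviation σ, a gradient-aligned
oscillation of frequency k on a unit slope is amplified with the globally bounded
frequency response factor k² e^{−k²σ²/2}/2, up to a uniform O(ε²) error. -/
theorem presmoothed_self_snakes_frequency_response (k σ : ℝ) (hk : 0 < k) (hσ : 0 < σ) :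
    ∃ C : ℝ, ∀ᶠ ε in 𝓝[>] (0:ℝ), ∀ p : Plane,
      |selfSnakesRHSsigma σ (uPert k ε) p -
          k ^ 2 * ε / 2 * Real.exp (-(k ^ 2 * σ ^ 2) / 2) * Real.cos (k * p 0)|
        ≤ C * ε ^ 2 := by
  refine ⟨8 * k ^ 3, ?_⟩
  have hmem : Set.Ioo (0:ℝ) (1/(2*k)) ∈ 𝓝[>] (0:ℝ) :=
    Ioo_mem_nhdsGT_of_mem ⟨le_refl 0, by positivity⟩
  filter_upwards [hmem] with ε hεmem
  obtain ⟨hε0, hεlt⟩ := hεmem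
  intro p
  have hεk2 : ε * k ≤ 1/2 := by
    have h2k : (0:ℝ) < 2 * k := by positivity
    have h := (lt_div_iff₀ h2k).mp hεlt
    nlinarith
  have hεk1 : ε * k < 1 := by linarith
  rw [aux_rhs_eq k σ ε hσ hε0 hεk1 hk p]
  exact aux_final_bound k ε (Real.exp (-(k ^ 2 * σ ^ 2) / 2)) (Real.sin (k * p 0))
    (Real.cos (k * p 0)) hk hε0 (Real.exp_pos _)
    (Real.exp_le_one_iff.mpr (by nlinarith [sq_nonneg (k * σ)]))
    hεk2 (Real.abs_sin_le_one _) (Real.abs_cos_le_one _)
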